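/- arXiv:1805.01139 — 2 statements merged into one kernel-verified Lean document; each statement's English description precedes it below -/
import Mathlib

section
/- For each i ∈ {1,2}, let 𝔅'_i be a superset of 𝔅_i ⊆ P_∅(X_i) every element of which is a finite union of pairwise disjoint events in 𝔅_i. Then for any coherent sets of desirable gambles D1 on X1 and D2 on X2, the set D1 ⊗' D2 computed with the families 𝔅'_1, 𝔅'_2 equals the set D1 ⊗ D2 computed with 𝔅_1, 𝔅_2; consequently, for any coherent conditional lower previsions lp1 on C_1 ⊆ C(X1) and lp2 on C_2 ⊆ C(X2), the independent natural extensions lp1⊗'lp2 and lp1⊗lp2 on C(X1×X2) coincide. -/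
open scoped BigOperators

namespace IPaper

variable {X : Type*}

/-- A gamble on `X`: a bounded real-valued function. -/
def IsGamble (f : X → ℝ) : Prop := ∃ M : ℝ, ∀ x, |f x| ≤ M

/-- The indicator gamble of an event. -/
noncomputable def ind (B : Set X) : X → ℝ := Set.indicator B 1

/-- The set `G_{>0}(X)` of nonnegative nonzero gambles. -/
def Gpos (X : Type*) : Set (X → ℝ) := {f | IsGamble f ∧ 0 ≤ f ∧ f ≠ 0}

/-- A coherent set of desirable gambles. -/
structure CoherentSDG (D : Set (X → ℝ)) : Prop where
  subset_gambles : ∀ f ∈ D, IsGamble f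
  d1 : ∀ f : X → ℝ, IsGamble f → 0 ≤ f → f ≠ 0 → f ∈ D
  d2 : ∀ f ∈ D, ∀ l : ℝ, 0 < l → l • f ∈ D
  d3 : ∀ f ∈ D, ∀ g ∈ D, f + g ∈ D
  d4 : ∀ f : X → ℝ, f ≤ 0 → f ∉ D

/-- `posi A`: positive linear hull of `A`. -/
def posi (A : Set (X → ℝ)) : Set (X → ℝ) :=
  {g | ∃ (n : ℕ) (l : Fin (n + 1) → ℝ) (h : Fin (n + 1) → X → ℝ),
    (∀ i, 0 < l i) ∧ (∀ i, h i ∈ A) ∧ g = ∑ i, l i • h i}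

/-- `E(A) := posi (A ∪ G_{>0}(X))`. -/
def natExtSet (A : Set (X → ℝ)) : Set (X → ℝ) := posi (A ∪ Gpos X)

/-- `C(X)`: all pairs of a gamble and a nonempty event. -/
def domC (X : Type*) : Set ((X → ℝ) × Set X) := {p | IsGamble p.1 ∧ p.2.Nonempty}

/-- The conditional lower prevision `lp_D` derived from a set of gambles `D`. -/
noncomputable def lpOf (D : Set (X → ℝ)) (f : X → ℝ) (B : Set X) : EReal :=
  sSup (Real.toEReal '' {m : ℝ | (fun x => (f x - m) * ind B x) ∈ D})

/-- Coherence (Williams) of a conditional lower prevision on a domain `C`. -/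
def Coherent (C : Set ((X → ℝ) × Set X)) (lp : (X → ℝ) → Set X → EReal) : Prop :=
  ∃ D : Set (X → ℝ), CoherentSDG D ∧ ∀ p ∈ C, lp p.1 p.2 = lpOf D p.1 p.2

/-- The set `A_lp`. -/
def Alp (C : Set ((X → ℝ) × Set X)) (lp : (X → ℝ) → Set X → EReal) : Set (X → ℝ) :=
  {g | ∃ p ∈ C, ∃ m : ℝ, (m : EReal) < lp p.1 p.2 ∧ g = fun x => (p.1 x - m) * ind p.2 x}

/-- `E(lp) := E(A_lp)`. -/
def ElpSet (C : Set ((X → ℝ) × Set X)) (lp : (X → ℝ) → Set X → EReal) : Set (X → ℝ) :=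
  natExtSet (Alp C lp)

/-- The natural extension of `lp` to all of `C(X)`. -/
noncomputable def natExtLP (C : Set ((X → ℝ) × Set X)) (lp : (X → ℝ) → Set X → EReal)
    (f : X → ℝ) (B : Set X) : EReal :=
  lpOf (ElpSet C lp) f B

/-- Simple `B`-measurable gamble. -/
def SimpleMeas (Bfam : Set (Set X)) (g : X → ℝ) : Prop :=
  ∃ (c0 : ℝ) (n : ℕ) (c : Fin n → ℝ) (Bs : Fin n → Set X),
    0 ≤ c0 ∧ (∀ i, 0 ≤ c i) ∧ (∀ i, Bs i ∈ Bfam) ∧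
    g = fun x => c0 + ∑ i, c i * ind (Bs i) x

/-- `B`-measurable gamble: uniform limit of nonnegative simple `B`-measurable gambles. -/
def BMeas (Bfam : Set (Set X)) (g : X → ℝ) : Prop :=
  ∃ gs : ℕ → X → ℝ, (∀ n, 0 ≤ gs n ∧ SimpleMeas Bfam (gs n)) ∧
    TendstoUniformly gs g Filter.atTop

/-- A conditional linear prevision on `C(X)`: a coherent self-conjugate conditional
lower prevision on the full domain. -/
def CondLinPrev (P : (X → ℝ) → Set X → EReal) : Prop :=
  Coherent (domC X) P ∧ ∀ p ∈ domC X, P p.1 p.2 = -P (-p.1) p.2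

section Product

variable {X1 X2 : Type*}

/-- `A_{1→2}`. -/
def A12 (D2 : Set (X2 → ℝ)) (F1 : Set (Set X1)) : Set (X1 × X2 → ℝ) :=
  {g | ∃ f2 ∈ D2, ∃ B1 ∈ F1 ∪ {Set.univ}, g = fun p => f2 p.2 * ind B1 p.1}

/-- `A_{2→1}`. -/
def A21 (D1 : Set (X1 → ℝ)) (F2 : Set (Set X2)) : Set (X1 × X2 → ℝ) :=
  {g | ∃ f1 ∈ D1, ∃ B2 ∈ F2 ∪ {Set.univ}, g = fun p => f1 p.1 * ind B2 p.2}

/-- `D1 ⊗ D2`, relative to the families of conditioning events `F1`, `F2`. -/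
def indNatExt (D1 : Set (X1 → ℝ)) (D2 : Set (X2 → ℝ))
    (F1 : Set (Set X1)) (F2 : Set (Set X2)) : Set (X1 × X2 → ℝ) :=
  natExtSet (A12 D2 F1 ∪ A21 D1 F2)

/-- `marg_1(D)`. -/
def marg1 (D : Set (X1 × X2 → ℝ)) : Set (X1 → ℝ) :=
  {f | IsGamble f ∧ (fun p : X1 × X2 => f p.1) ∈ D}

/-- `marg_2(D)`. -/
def marg2 (D : Set (X1 × X2 → ℝ)) : Set (X2 → ℝ) :=
  {f | IsGamble f ∧ (fun p : X1 × X2 => f p.2) ∈ D}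

/-- `marg_1(D|B2)`. -/
def marg1c (D : Set (X1 × X2 → ℝ)) (B2 : Set X2) : Set (X1 → ℝ) :=
  {f | IsGamble f ∧ (fun p : X1 × X2 => f p.1 * ind B2 p.2) ∈ D}

/-- `marg_2(D|B1)`. -/
def marg2c (D : Set (X1 × X2 → ℝ)) (B1 : Set X1) : Set (X2 → ℝ) :=
  {f | IsGamble f ∧ (fun p : X1 × X2 => f p.2 * ind B1 p.1) ∈ D}

/-- Epistemic independence of a set of desirable gambles on `X1 × X2`. -/
def EpIndSDG (F1 : Set (Set X1)) (F2 : Set (Set X2)) (D : Set (X1 × X2 → ℝ)) : Prop :=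
  (∀ B2 ∈ F2, marg1c D B2 = marg1 D) ∧ (∀ B1 ∈ F1, marg2c D B1 = marg2 D)

/-- Independent product (of sets of desirable gambles). -/
def IndProductSDG (F1 : Set (Set X1)) (F2 : Set (Set X2))
    (D1 : Set (X1 → ℝ)) (D2 : Set (X2 → ℝ)) (D : Set (X1 × X2 → ℝ)) : Prop :=
  CoherentSDG D ∧ EpIndSDG F1 F2 D ∧ marg1 D = D1 ∧ marg2 D = D2

/-- The independent natural extension `lp1 ⊗ lp2` on `C(X1 × X2)`. -/
noncomputable def lpProd (C1 : Set ((X1 → ℝ) × Set X1)) (lp1 : (X1 → ℝ) → Set X1 → EReal)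
    (C2 : Set ((X2 → ℝ) × Set X2)) (lp2 : (X2 → ℝ) → Set X2 → EReal)
    (F1 : Set (Set X1)) (F2 : Set (Set X2)) :
    (X1 × X2 → ℝ) → Set (X1 × X2) → EReal :=
  lpOf (indNatExt (ElpSet C1 lp1) (ElpSet C2 lp2) F1 F2)

/-- An independent domain `C ⊆ C(X1 × X2)`. -/
def IndepDomain (F1 : Set (Set X1)) (F2 : Set (Set X2))
    (C : Set ((X1 × X2 → ℝ) × Set (X1 × X2))) : Prop :=
  (∀ (f1 : X1 → ℝ) (B1 : Set X1), IsGamble f1 → B1.Nonempty → ∀ B2 ∈ F2,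
    (((fun p : X1 × X2 => f1 p.1), B1 ×ˢ (Set.univ : Set X2)) ∈ C ↔
      ((fun p : X1 × X2 => f1 p.1), B1 ×ˢ B2) ∈ C)) ∧
  (∀ (f2 : X2 → ℝ) (B2 : Set X2), IsGamble f2 → B2.Nonempty → ∀ B1 ∈ F1,
    (((fun p : X1 × X2 => f2 p.2), (Set.univ : Set X1) ×ˢ B2) ∈ C ↔
      ((fun p : X1 × X2 => f2 p.2), B1 ×ˢ B2) ∈ C))

/-- Epistemic independence of a conditional lower prevision on a domain `C`. -/
def EpIndLP (F1 : Set (Set X1)) (F2 : Set (Set X2))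
    (C : Set ((X1 × X2 → ℝ) × Set (X1 × X2)))
    (lp : (X1 × X2 → ℝ) → Set (X1 × X2) → EReal) : Prop :=
  (∀ (f1 : X1 → ℝ) (B1 : Set X1), IsGamble f1 → B1.Nonempty →
    ((fun p : X1 × X2 => f1 p.1), B1 ×ˢ (Set.univ : Set X2)) ∈ C → ∀ B2 ∈ F2,
    lp (fun p : X1 × X2 => f1 p.1) (B1 ×ˢ (Set.univ : Set X2)) =
      lp (fun p : X1 × X2 => f1 p.1) (B1 ×ˢ B2)) ∧
  (∀ (f2 : X2 → ℝ) (B2 : Set X2), IsGamble f2 → B2.Nonempty →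
    ((fun p : X1 × X2 => f2 p.2), (Set.univ : Set X1) ×ˢ B2) ∈ C → ∀ B1 ∈ F1,
    lp (fun p : X1 × X2 => f2 p.2) ((Set.univ : Set X1) ×ˢ B2) =
      lp (fun p : X1 × X2 => f2 p.2) (B1 ×ˢ B2))

/-- Independent product of two conditional lower previsions, on the joint domain `C`. -/
def IndProductLP (F1 : Set (Set X1)) (F2 : Set (Set X2))
    (C1 : Set ((X1 → ℝ) × Set X1)) (lp1 : (X1 → ℝ) → Set X1 → EReal)
    (C2 : Set ((X2 → ℝ) × Set X2)) (lp2 : (X2 → ℝ) → Set X2 → EReal)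
    (C : Set ((X1 × X2 → ℝ) × Set (X1 × X2)))
    (lp : (X1 × X2 → ℝ) → Set (X1 × X2) → EReal) : Prop :=
  Coherent C lp ∧ EpIndLP F1 F2 C lp ∧
  (∀ p ∈ C1, lp (fun q : X1 × X2 => p.1 q.1) (p.2 ×ˢ (Set.univ : Set X2)) = lp1 p.1 p.2) ∧
  (∀ p ∈ C2, lp (fun q : X1 × X2 => p.1 q.2) ((Set.univ : Set X1) ×ˢ p.2) = lp2 p.1 p.2)

end Product


section Aux

variable {Y : Type*}

lemma mem_posi_self {S : Set (Y → ℝ)} {f : Y → ℝ} (hf : f ∈ S) : f ∈ posi S :=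
  ⟨0, fun _ => 1, fun _ => f, fun _ => one_pos, fun _ => hf, by simp⟩

lemma posi_smul {S : Set (Y → ℝ)} {f : Y → ℝ} (hf : f ∈ posi S) {c : ℝ} (hc : 0 < c) :
    c • f ∈ posi S := by
  obtain ⟨n, l, h, hl, hh, rfl⟩ := hf
  refine ⟨n, fun i => c * l i, h, fun i => mul_pos hc (hl i), hh, ?_⟩
  rw [Finset.smul_sum]
  exact Finset.sum_congr rfl fun i _ => by simp [smul_smul]

lemma posi_add {S : Set (Y → ℝ)} {f g : Y → ℝ} (hf : f ∈ posi S) (hg : g ∈ posi S) :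
    f + g ∈ posi S := by
  obtain ⟨n, l, h, hl, hh, rfl⟩ := hf
  obtain ⟨m, l', h', hl', hh', rfl⟩ := hg
  have heq : (n + m + 1) + 1 = (n + 1) + (m + 1) := by omega
  refine ⟨n + m + 1, fun i => Fin.append l l' (finCongr heq i),
    fun i => Fin.append h h' (finCongr heq i), ?_, ?_, ?_⟩
  · intro i
    refine Fin.addCases (motive := fun j => 0 < Fin.append l l' j) ?_ ?_ (finCongr heq i)
    · intro j; rw [Fin.append_left]; exact hl j
    · intro j; rw [Fin.append_right]; exact hl' j
  · intro i
    refine Fin.addCases (motive := fun j => Fin.append h h' j ∈ S) ?_ ?_ (finCongr heq i)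
    · intro j; rw [Fin.append_left]; exact hh j
    · intro j; rw [Fin.append_right]; exact hh' j
  · rw [Fintype.sum_equiv (finCongr heq)
      (fun i => Fin.append l l' (finCongr heq i) • Fin.append h h' (finCongr heq i))
      (fun j => Fin.append l l' j • Fin.append h h' j) (fun i => rfl)]
    rw [Fin.sum_univ_add (f := fun j : Fin ((n + 1) + (m + 1)) =>
      Fin.append l l' j • Fin.append h h' j)]
    congr 1 <;> exact Finset.sum_congr rfl fun i _ => by
      simp [Fin.append_left, Fin.append_right]

lemma sum_mem_posi {S : Set (Y → ℝ)} : ∀ (n : ℕ) (l : Fin (n + 1) → ℝ)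
    (h : Fin (n + 1) → Y → ℝ), (∀ i, 0 < l i) → (∀ i, h i ∈ posi S) →
    (∑ i, l i • h i) ∈ posi S := by
  intro n
  induction n with
  | zero =>
    intro l h hl hh
    rw [Fin.sum_univ_one]
    exact posi_smul (hh 0) (hl 0)
  | succ m ih =>
    intro l h hl hh
    rw [Fin.sum_univ_succ]
    exact posi_add (posi_smul (hh 0) (hl 0))
      (ih (fun i => l i.succ) (fun i => h i.succ) (fun i => hl i.succ) (fun i => hh i.succ))

lemma posi_mono {S T : Set (Y → ℝ)} (hST : S ⊆ T) : posi S ⊆ posi T := by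
  rintro g ⟨n, l, h, hl, hh, rfl⟩
  exact ⟨n, l, h, hl, fun i => hST (hh i), rfl⟩

lemma posi_subset_posi {S T : Set (Y → ℝ)} (hST : S ⊆ posi T) : posi S ⊆ posi T := by
  rintro g ⟨n, l, h, hl, hh, rfl⟩
  exact sum_mem_posi n l h hl fun i => hST (hh i)

lemma ind_iUnion_disjoint {n : ℕ} {Bs : Fin n → Set Y}
    (hd : Pairwise fun i j => Disjoint (Bs i) (Bs j)) (x : Y) :
    ind (⋃ k, Bs k) x = ∑ k, ind (Bs k) x := by
  unfold ind
  by_cases hx : x ∈ ⋃ i, Bs i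
  · obtain ⟨k, hk⟩ := Set.mem_iUnion.1 hx
    rw [Finset.sum_eq_single k]
    · simp [Set.indicator_of_mem hx, Set.indicator_of_mem hk]
    · intro j _ hj
      exact Set.indicator_of_notMem (fun hxj => Set.disjoint_left.mp (hd hj) hxj hk) 1
    · intro h; exact absurd (Finset.mem_univ k) h
  · rw [Set.indicator_of_notMem hx]
    symm
    exact Finset.sum_eq_zero fun j _ =>
      Set.indicator_of_notMem (fun hxj => hx (Set.mem_iUnion.2 ⟨j, hxj⟩)) 1

lemma indNatExt_congr {X1 X2 : Type*}
    (F1 F1' : Set (Set X1)) (F2 F2' : Set (Set X2))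
    (hF1' : ∀ A ∈ F1', A.Nonempty) (hF2' : ∀ A ∈ F2', A.Nonempty)
    (hs1 : F1 ⊆ F1') (hs2 : F2 ⊆ F2')
    (hu1 : ∀ A ∈ F1', ∃ (n : ℕ) (Bs : Fin n → Set X1),
      (∀ k, Bs k ∈ F1) ∧ (Pairwise fun i j => Disjoint (Bs i) (Bs j)) ∧ A = ⋃ k, Bs k)
    (hu2 : ∀ A ∈ F2', ∃ (n : ℕ) (Bs : Fin n → Set X2),
      (∀ k, Bs k ∈ F2) ∧ (Pairwise fun i j => Disjoint (Bs i) (Bs j)) ∧ A = ⋃ k, Bs k)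
    (D1 : Set (X1 → ℝ)) (D2 : Set (X2 → ℝ)) :
    indNatExt D1 D2 F1' F2' = indNatExt D1 D2 F1 F2 := by
  unfold indNatExt natExtSet
  apply le_antisymm
  · apply posi_subset_posi
    rintro g (hg | hg)
    · rcases hg with (⟨f2, hf2, B1, hB1, rfl⟩ | ⟨f1, hf1, B2, hB2, rfl⟩)
      · -- A12 with F1'
        rcases hB1 with hB1 | hB1
        · -- B1 ∈ F1' : decompose
          obtain ⟨n, Bs, hBsF, hdisj, rfl⟩ := hu1 B1 hB1
          obtain ⟨x, hx⟩ := hF1' _ hB1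
          match n with
          | 0 => exact absurd hx (by simp)
          | m + 1 =>
            refine ⟨m, fun _ => 1, fun k p => f2 p.2 * ind (Bs k) p.1, fun _ => one_pos,
              fun k => Or.inl (Or.inl ⟨f2, hf2, Bs k, Or.inl (hBsF k), rfl⟩), ?_⟩
            funext p
            simp only [Finset.sum_apply, Pi.smul_apply, smul_eq_mul, one_mul]
            rw [ind_iUnion_disjoint hdisj, Finset.mul_sum]
        · exact mem_posi_self (Or.inl (Or.inl ⟨f2, hf2, B1, Or.inr hB1, rfl⟩))
      · -- A21 with F2'
        rcases hB2 with hB2 | hB2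
        · obtain ⟨n, Bs, hBsF, hdisj, rfl⟩ := hu2 B2 hB2
          obtain ⟨x, hx⟩ := hF2' _ hB2
          match n with
          | 0 => exact absurd hx (by simp)
          | m + 1 =>
            refine ⟨m, fun _ => 1, fun k p => f1 p.1 * ind (Bs k) p.2, fun _ => one_pos,
              fun k => Or.inl (Or.inr ⟨f1, hf1, Bs k, Or.inl (hBsF k), rfl⟩), ?_⟩
            funext p
            simp only [Finset.sum_apply, Pi.smul_apply, smul_eq_mul, one_mul]
            rw [ind_iUnion_disjoint hdisj, Finset.mul_sum]
        · exact mem_posi_self (Or.inl (Or.inr ⟨f1, hf1, B2, Or.inr hB2, rfl⟩))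
    · exact mem_posi_self (Or.inr hg)
  · apply posi_mono
    rintro g (hg | hg)
    · rcases hg with (⟨f2, hf2, B1, hB1, rfl⟩ | ⟨f1, hf1, B2, hB2, rfl⟩)
      · exact Or.inl (Or.inl ⟨f2, hf2, B1, hB1.imp_left (@hs1 B1), rfl⟩)
      · exact Or.inl (Or.inr ⟨f1, hf1, B2, hB2.imp_left (@hs2 B2), rfl⟩)
    · exact Or.inr hg

end Aux

/-- Proposition 13: enlarging the families of conditioning events by
finite disjoint unions does not change the independent natural extension. -/
theorem stmt13 {X1 X2 : Type*} [Nonempty X1] [Nonempty X2]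
    (F1 F1' : Set (Set X1)) (F2 F2' : Set (Set X2))
    (hF1 : ∀ A ∈ F1, A.Nonempty) (hF2 : ∀ A ∈ F2, A.Nonempty)
    (hF1' : ∀ A ∈ F1', A.Nonempty) (hF2' : ∀ A ∈ F2', A.Nonempty)
    (hs1 : F1 ⊆ F1') (hs2 : F2 ⊆ F2')
    (hu1 : ∀ A ∈ F1', ∃ (n : ℕ) (Bs : Fin n → Set X1),
      (∀ k, Bs k ∈ F1) ∧ (Pairwise fun i j => Disjoint (Bs i) (Bs j)) ∧ A = ⋃ k, Bs k)
    (hu2 : ∀ A ∈ F2', ∃ (n : ℕ) (Bs : Fin n → Set X2),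
      (∀ k, Bs k ∈ F2) ∧ (Pairwise fun i j => Disjoint (Bs i) (Bs j)) ∧ A = ⋃ k, Bs k) :
    (∀ (D1 : Set (X1 → ℝ)) (D2 : Set (X2 → ℝ)), CoherentSDG D1 → CoherentSDG D2 →
      indNatExt D1 D2 F1' F2' = indNatExt D1 D2 F1 F2) ∧
    (∀ (C1 : Set ((X1 → ℝ) × Set X1)) (lp1 : (X1 → ℝ) → Set X1 → EReal)
        (C2 : Set ((X2 → ℝ) × Set X2)) (lp2 : (X2 → ℝ) → Set X2 → EReal),
      C1 ⊆ domC X1 → Coherent C1 lp1 → C2 ⊆ domC X2 → Coherent C2 lp2 →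
      ∀ (f : X1 × X2 → ℝ) (B : Set (X1 × X2)),
        lpProd C1 lp1 C2 lp2 F1' F2' f B = lpProd C1 lp1 C2 lp2 F1 F2 f B) := by
  constructor
  · intro D1 D2 _ _
    exact indNatExt_congr F1 F1' F2 F2' hF1' hF2' hs1 hs2 hu1 hu2 D1 D2
  · intro C1 lp1 C2 lp2 _ _ _ _ f B
    unfold lpProd
    rw [indNatExt_congr F1 F1' F2 F2' hF1' hF2' hs1 hs2 hu1 hu2]

end IPaper
end

section
/- For i ∈ {1,2}, let lp_i be a coherent conditional lower prevision on C_i ⊆ C(X_i) with natural extension E_i to C(X_i), and let 𝔅_i ⊆ P_∅(X_i). Then for all {i,j} = {1,2}, every gamble f on X_i, every gamble h on X_j, and every nonnegative 𝔅_i-measurable gamble g on X_i: (lp1⊗lp2)(f + g·h) = E_i( f + g·E_j(h) ), where f + g·h denotes the gamble on X1×X2 whose value at (x1,x2) is f(x_i) + g(x_i)·h(x_j), E_j(h) := E_j(h | X_j) ∈ ℝ, f + g·E_j(h) is a gamble on X_i, and (lp1⊗lp2)(·) abbreviates (lp1⊗lp2)(· | X1×X2) and E_i(·) abbreviates E_i(·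 | X_i). -/
open scoped BigOperators

namespace IPaper

variable {X : Type*}

section Aux

lemma ind_nonneg (B : Set X) (x : X) : 0 ≤ ind B x := by
  unfold ind; by_cases h : x ∈ B <;> simp [Set.indicator_apply, h]

lemma ind_le_one (B : Set X) (x : X) : ind B x ≤ 1 := by
  unfold ind; by_cases h : x ∈ B <;> simp [Set.indicator_apply, h]

lemma ind_univ (x : X) : ind (Set.univ : Set X) x = 1 := by
  simp [ind, Set.indicator_apply]

lemma isGamble_const (c : ℝ) : IsGamble (fun _ : X => c) := ⟨|c|, fun _ => le_rfl⟩

lemma IsGamble.add {f g : X → ℝ} (hf : IsGamble f) (hg : IsGamble g) :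
    IsGamble (fun x => f x + g x) := by
  obtain ⟨M, hM⟩ := hf; obtain ⟨N, hN⟩ := hg
  exact ⟨M + N, fun x => (abs_add_le _ _).trans (add_le_add (hM x) (hN x))⟩

lemma IsGamble.mul {f g : X → ℝ} (hf : IsGamble f) (hg : IsGamble g) :
    IsGamble (fun x => f x * g x) := by
  obtain ⟨M, hM⟩ := hf; obtain ⟨N, hN⟩ := hg
  refine ⟨M * N, fun x => ?_⟩
  rw [abs_mul]
  have h0 : (0:ℝ) ≤ |f x| := abs_nonneg _
  exact mul_le_mul (hM x) (hN x) (abs_nonneg _) ((abs_nonneg (f x)).trans (hM x))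

lemma IsGamble.smul {f : X → ℝ} (c : ℝ) (hf : IsGamble f) :
    IsGamble (fun x => c * f x) := (isGamble_const c).mul hf

lemma IsGamble.sub_const {f : X → ℝ} (hf : IsGamble f) (m : ℝ) :
    IsGamble (fun x => f x - m) := by
  have := hf.add (isGamble_const (-m)); simpa [sub_eq_add_neg] using this

lemma IsGamble.sub {f g : X → ℝ} (hf : IsGamble f) (hg : IsGamble g) :
    IsGamble (fun x => f x - g x) := by
  have := hf.add (hg.smul (-1))
  have e : (fun x => f x - g x) = fun x => f x + (-1) * g x := by funext x; ring
  rw [e]; exact this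

lemma IsGamble.bound_nonneg {f : X → ℝ} (hf : IsGamble f) :
    ∃ M : ℝ, 0 ≤ M ∧ ∀ x, |f x| ≤ M := by
  obtain ⟨M, hM⟩ := hf
  refine ⟨max M 0, le_max_right _ _, fun x => (hM x).trans (le_max_left _ _)⟩

lemma IsGamble.sum {n : ℕ} {f : Fin n → X → ℝ} (hf : ∀ i, IsGamble (f i)) :
    IsGamble (fun x => ∑ i, f i x) := by
  induction n with
  | zero => simpa using isGamble_const (X := X) 0
  | succ n ih =>
    have h1 : IsGamble (fun x => f 0 x + ∑ i : Fin n, f i.succ x) :=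
      (hf 0).add (ih (fun i => hf i.succ))
    simpa [Fin.sum_univ_succ] using h1

lemma isGamble_ind (B : Set X) : IsGamble (ind B) :=
  ⟨1, fun x => abs_le.mpr ⟨by linarith [ind_nonneg B x], ind_le_one B x⟩⟩


-- posi lemmas
lemma posi_of_mem {A : Set (X → ℝ)} {a : X → ℝ} (ha : a ∈ A) : a ∈ posi A :=
  ⟨0, fun _ => 1, fun _ => a, fun _ => one_pos, fun _ => ha, by simp⟩

lemma posi_smul_s14 {A : Set (X → ℝ)} {g : X → ℝ} {c : ℝ} (hc : 0 < c) (hg : g ∈ posi A) :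
    (fun x => c * g x) ∈ posi A := by
  obtain ⟨n, l, h, hl, hmem, rfl⟩ := hg
  refine ⟨n, fun i => c * l i, h, fun i => mul_pos hc (hl i), hmem, ?_⟩
  funext x
  simp [Finset.sum_apply, Finset.mul_sum, mul_assoc]

lemma posi_add_s14 {A : Set (X → ℝ)} {g1 g2 : X → ℝ} (h1 : g1 ∈ posi A) (h2 : g2 ∈ posi A) :
    g1 + g2 ∈ posi A := by
  obtain ⟨n1, l1, f1, hl1, hm1, rfl⟩ := h1
  obtain ⟨n2, l2, f2, hl2, hm2, rfl⟩ := h2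
  refine ⟨n1 + 1 + n2, Fin.append (m := n1+1) (n := n2+1) l1 l2,
    Fin.append (m := n1+1) (n := n2+1) f1 f2, ?_, ?_, ?_⟩
  · refine Fin.addCases (m := n1+1) (n := n2+1) ?_ ?_ <;> intro i <;>
      simp [Fin.append_left, Fin.append_right, hl1, hl2]
  · refine Fin.addCases (m := n1+1) (n := n2+1) ?_ ?_ <;> intro i <;>
      simp [Fin.append_left, Fin.append_right, hm1, hm2]
  · show _ = ∑ i : Fin ((n1+1) + (n2+1)),
      Fin.append (m := n1+1) (n := n2+1) l1 l2 i • Fin.append (m := n1+1) (n := n2+1) f1 f2 i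
    conv_rhs => rw [Fin.sum_univ_add]
    simp [Fin.append_left, Fin.append_right]

lemma Gpos_subset {D : Set (X → ℝ)} (hD : CoherentSDG D) : Gpos X ⊆ D :=
  fun f hf => hD.d1 f hf.1 hf.2.1 hf.2.2

lemma sum_mem_coherent {D : Set (X → ℝ)} (hD : CoherentSDG D) {n : ℕ}
    {l : Fin (n+1) → ℝ} {h : Fin (n+1) → X → ℝ} (hl : ∀ i, 0 < l i) (hm : ∀ i, h i ∈ D) :
    (∑ i, l i • h i) ∈ D := by
  induction n with
  | zero => simpa using hD.d2 _ (hm 0) _ (hl 0)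
  | succ n ih =>
    rw [Fin.sum_univ_succ]
    exact hD.d3 _ (hD.d2 _ (hm 0) _ (hl 0)) _ (ih (fun i => hl i.succ) (fun i => hm i.succ))

lemma natExtSet_subset {D : Set (X → ℝ)} (hD : CoherentSDG D) {A : Set (X → ℝ)}
    (hA : A ⊆ D) : natExtSet A ⊆ D := by
  rintro g ⟨n, l, h, hl, hm, rfl⟩
  exact sum_mem_coherent hD hl (fun i => (hm i).elim (fun h' => hA h') (fun h' => Gpos_subset hD h'))

lemma posi_isGamble {A : Set (X → ℝ)} (hA : ∀ a ∈ A, IsGamble a) {g : X → ℝ}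
    (hg : g ∈ posi A) : IsGamble g := by
  obtain ⟨n, l, h, hl, hm, rfl⟩ := hg
  have : ∀ i : Fin (n+1), IsGamble (fun x => l i * h i x) :=
    fun i => IsGamble.smul _ (hA _ (hm i))
  have h2 := IsGamble.sum this
  have : (∑ i, l i • h i) = fun x => ∑ i : Fin (n+1), l i * h i x := by
    funext x; simp [Finset.sum_apply]
  rw [this]; exact h2


/-! ### Real-valued lower prevision from a coherent set -/

def Sset (D : Set (X → ℝ)) (h : X → ℝ) : Set ℝ := {m | (fun x => h x - m) ∈ D}

noncomputable def Lr (D : Set (X → ℝ)) (h : X → ℝ) : ℝ := sSup (Sset D h)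

section LrProps

variable [Nonempty X] {D : Set (X → ℝ)} {h h' : X → ℝ} {m c : ℝ}

lemma const_mem (hD : CoherentSDG D) (hc : 0 < c) : (fun _ : X => c) ∈ D := by
  refine hD.d1 _ (isGamble_const c) (fun x => le_of_lt hc) ?_
  intro h0
  obtain ⟨x⟩ := ‹Nonempty X›
  have := congrFun h0 x
  simp only [Pi.zero_apply] at this
  linarith

lemma Sset_nonempty (hD : CoherentSDG D) (hh : IsGamble h) : (Sset D h).Nonempty := by
  obtain ⟨M, hM0, hM⟩ := hh.bound_nonneg
  refine ⟨-(M+1), ?_⟩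
  have h1 : ∀ x, (1:ℝ) ≤ h x - -(M+1) := by
    intro x; have := (abs_le.mp (hM x)).1; linarith
  refine hD.d1 _ ((hh.sub_const _)) (fun x => by simp only [Pi.zero_apply]; linarith [h1 x]) ?_
  intro h0
  obtain ⟨x⟩ := ‹Nonempty X›
  have := congrFun h0 x
  simp only [Pi.zero_apply] at this
  linarith [h1 x]

lemma Sset_bddAbove (hD : CoherentSDG D) (hh : IsGamble h) : BddAbove (Sset D h) := by
  obtain ⟨M, hM0, hM⟩ := hh.bound_nonneg
  refine ⟨M, fun m hm => ?_⟩
  by_contra hlt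
  push_neg at hlt
  refine hD.d4 _ (fun x => ?_) hm
  have := (abs_le.mp (hM x)).2
  simp only [Pi.zero_apply]
  linarith

lemma Sset_downward (hD : CoherentSDG D) (hm : m ∈ Sset D h) (hm' : m' < m) :
    m' ∈ Sset D h := by
  have : (fun x => h x - m') = (fun x => h x - m) + (fun _ => m - m') := by
    funext x; simp only [Pi.add_apply]; ring
  show _ ∈ D
  rw [this]
  exact hD.d3 _ hm _ (const_mem hD (by linarith))

lemma mem_of_lt_Lr (hD : CoherentSDG D) (hh : IsGamble h) (hm : m < Lr D h) :
    m ∈ Sset D h := by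
  obtain ⟨b, hb, hmb⟩ := exists_lt_of_lt_csSup (Sset_nonempty hD hh) hm
  exact Sset_downward hD hb hmb

lemma le_Lr (hD : CoherentSDG D) (hh : IsGamble h) (hm : m ∈ Sset D h) : m ≤ Lr D h :=
  le_csSup (Sset_bddAbove hD hh) hm

lemma Lr_mono (hD : CoherentSDG D) (hh : IsGamble h) (hh' : IsGamble h')
    (hle : ∀ x, h x ≤ h' x) : Lr D h ≤ Lr D h' := by
  refine csSup_le (Sset_nonempty hD hh) (fun m hm => ?_)
  refine le_of_forall_pos_le_add (fun ε hε => ?_)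
  have key : m - ε ∈ Sset D h' := by
    have : (fun x => h' x - (m - ε)) = (fun x => h x - m) + (fun x => h' x - h x + ε) := by
      funext x; simp only [Pi.add_apply]; ring
    show _ ∈ D
    rw [this]
    refine hD.d3 _ hm _ (hD.d1 _ ?_ (fun x => by simp only [Pi.zero_apply]; linarith [hle x]) ?_)
    · exact (hh'.sub hh).add (isGamble_const ε)
    · intro h0
      obtain ⟨x⟩ := ‹Nonempty X›
      have := congrFun h0 x
      simp only [Pi.zero_apply] at this
      have := hle x
      linarith
  linarith [le_Lr hD hh' key]

lemma Lr_const (hD : CoherentSDG D) : Lr D (fun _ : X => c) = c := by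
  have : Sset D (fun _ : X => c) = Set.Iio c := by
    ext m
    simp only [Sset, Set.mem_setOf_eq, Set.mem_Iio]
    constructor
    · intro hm
      by_contra hle
      push_neg at hle
      exact hD.d4 _ (fun x => by simp; linarith) hm
    · intro hm
      exact const_mem hD (by linarith)
  show sSup _ = _
  rw [this, csSup_Iio]

lemma Lr_add_const (hD : CoherentSDG D) (hh : IsGamble h) :
    Lr D (fun x => h x + c) = Lr D h + c := by
  have hg : IsGamble (fun x => h x + c) := hh.add (isGamble_const c)
  apply le_antisymm
  · refine csSup_le (Sset_nonempty hD hg) (fun m hm => ?_)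
    have : m - c ∈ Sset D h := by
      show _ ∈ D
      have e : (fun x => h x - (m - c)) = (fun x => h x + c - m) := by funext x; ring
      rw [e]; exact hm
    linarith [le_Lr hD hh this]
  · have : ∀ m ∈ Sset D h, m ≤ Lr D (fun x => h x + c) - c := by
      intro m hm
      have : m + c ∈ Sset D (fun x => h x + c) := by
        show _ ∈ D
        have e : (fun x => h x + c - (m + c)) = (fun x => h x - m) := by funext x; ring
        rw [e]; exact hm
      linarith [le_Lr hD hg this]
    have h2 : Lr D h ≤ Lr D (fun x => h x + c) - c := csSup_le (Sset_nonempty hD hh) this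
    linarith

lemma Lr_smul (hD : CoherentSDG D) (hh : IsGamble h) (hc : 0 ≤ c) :
    Lr D (fun x => c * h x) = c * Lr D h := by
  rcases eq_or_lt_of_le hc with rfl | hc
  · simp only [zero_mul]
    exact Lr_const hD
  · have hg : IsGamble (fun x => c * h x) := hh.smul c
    apply le_antisymm
    · refine csSup_le (Sset_nonempty hD hg) (fun m hm => ?_)
      have key : m / c ∈ Sset D h := by
        show _ ∈ D
        have e : (fun x => h x - m / c) = (1/c) • (fun x => c * h x - m) := by
          funext x; simp only [Pi.smul_apply, smul_eq_mul]; field_simp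
        rw [e]
        exact hD.d2 _ hm _ (by positivity)
      have := le_Lr hD hh key
      rw [div_le_iff₀ hc] at this
      linarith [this]
    · have h1 : ∀ m ∈ Sset D h, c * m ≤ Lr D (fun x => c * h x) := by
        intro m hm
        refine le_Lr hD hg ?_
        show _ ∈ D
        have e : (fun x => c * h x - c * m) = c • (fun x => h x - m) := by
          funext x; simp only [Pi.smul_apply, smul_eq_mul]; ring
        rw [e]
        exact hD.d2 _ hm _ hc
      have : ∀ m ∈ Sset D h, m ≤ Lr D (fun x => c * h x) / c := by
        intro m hm
        rw [le_div_iff₀ hc]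
        linarith [h1 m hm]
      have h2 : Lr D h ≤ Lr D (fun x => c * h x) / c := csSup_le (Sset_nonempty hD hh) this
      rw [← le_div_iff₀' hc]
      exact h2

lemma Lr_superadd (hD : CoherentSDG D) (hh : IsGamble h) (hh' : IsGamble h') :
    Lr D h + Lr D h' ≤ Lr D (fun x => h x + h' x) := by
  refine le_of_forall_pos_le_add (fun ε hε => ?_)
  have hm : Lr D h - ε/2 ∈ Sset D h := mem_of_lt_Lr hD hh (by linarith)
  have hm' : Lr D h' - ε/2 ∈ Sset D h' := mem_of_lt_Lr hD hh' (by linarith)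
  have key : Lr D h + Lr D h' - ε ∈ Sset D (fun x => h x + h' x) := by
    show _ ∈ D
    have e : (fun x => h x + h' x - (Lr D h + Lr D h' - ε)) =
        (fun x => h x - (Lr D h - ε/2)) + (fun x => h' x - (Lr D h' - ε/2)) := by
      funext x; simp only [Pi.add_apply]; ring
    rw [e]
    exact hD.d3 _ hm _ hm'
  linarith [le_Lr hD (hh.add hh') key]

lemma Lr_nonneg_of_mem (hD : CoherentSDG D) (hmem : h ∈ D) : 0 ≤ Lr D h := by
  refine le_of_forall_pos_le_add (fun ε hε => ?_)
  have : -ε ∈ Sset D h := by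
    show _ ∈ D
    have e : (fun x => h x - (-ε)) = h + (fun _ => ε) := by funext x; simp only [Pi.add_apply]; ring
    rw [e]
    exact hD.d3 _ hmem _ (const_mem hD hε)
  linarith [le_Lr hD (hD.subset_gambles h hmem) this]

lemma Lr_le_const (hD : CoherentSDG D) (hh : IsGamble h) (hle : ∀ x, h x ≤ c) :
    Lr D h ≤ c := by
  have := Lr_mono hD hh (isGamble_const c) hle
  rwa [Lr_const hD] at this

lemma const_le_Lr (hD : CoherentSDG D) (hh : IsGamble h) (hle : ∀ x, c ≤ h x) :
    c ≤ Lr D h := by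
  have := Lr_mono hD (isGamble_const c) hh hle
  rwa [Lr_const hD] at this

end LrProps

lemma sSup_image_coe {S : Set ℝ} (hne : S.Nonempty) (hbdd : BddAbove S) :
    sSup (Real.toEReal '' S) = ((sSup S : ℝ) : EReal) := by
  apply le_antisymm
  · refine sSup_le ?_
    rintro e ⟨m, hm, rfl⟩
    exact EReal.coe_le_coe_iff.mpr (le_csSup hbdd hm)
  · refine le_of_forall_lt (fun cc hcc => ?_)
    induction cc using EReal.rec with
    | bot =>
      obtain ⟨m, hm⟩ := hne
      exact lt_of_lt_of_le (EReal.bot_lt_coe m) (le_sSup ⟨m, hm, rfl⟩)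
    | coe r =>
      obtain ⟨m, hm, hrm⟩ := exists_lt_of_lt_csSup hne (EReal.coe_lt_coe_iff.mp hcc)
      exact lt_of_lt_of_le (EReal.coe_lt_coe_iff.mpr hrm) (le_sSup ⟨m, hm, rfl⟩)
    | top => exact absurd hcc (not_lt.mpr le_top)

lemma lpOf_univ_eq [Nonempty X] {D : Set (X → ℝ)} (hD : CoherentSDG D) {h : X → ℝ}
    (hh : IsGamble h) : lpOf D h Set.univ = ((Lr D h : ℝ) : EReal) := by
  unfold lpOf
  have e : {m : ℝ | (fun x => (h x - m) * ind Set.univ x) ∈ D} = Sset D h := by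
    ext m
    have e2 : (fun x => (h x - m) * ind Set.univ x) = fun x => h x - m := by
      funext x; rw [ind_univ, mul_one]
    simp only [Set.mem_setOf_eq, Sset, e2]
  rw [e, sSup_image_coe (Sset_nonempty hD hh) (Sset_bddAbove hD hh)]
  rfl

/-! ### Linear previsions via Hahn-Banach -/

lemma IsGamble.neg {f : X → ℝ} (hf : IsGamble f) : IsGamble (fun x => -f x) := by
  have := hf.smul (-1)
  have e : (fun x => -f x) = fun x => (-1) * f x := by funext x; ring
  rw [e]; exact this

/-- The submodule of bounded functions. -/
def Gsub (X : Type*) : Submodule ℝ (X → ℝ) where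
  carrier := {f | IsGamble f}
  add_mem' := fun {a b} ha hb => ha.add hb
  zero_mem' := isGamble_const 0
  smul_mem' := fun c {a} ha => ha.smul c

lemma L_le_U [Nonempty X] {D : Set (X → ℝ)} (hD : CoherentSDG D) {h : X → ℝ}
    (hh : IsGamble h) : Lr D h ≤ -Lr D (fun x => -h x) := by
  have h1 := Lr_superadd hD hh hh.neg
  have e : (fun x => h x + -h x) = fun _ : X => (0:ℝ) := by funext x; ring
  rw [e, Lr_const hD] at h1
  linarith

/-- Existence of a linear prevision dominating `Lr D` and agreeing with it at `k`. -/
lemma exists_P [Nonempty X] {D : Set (X → ℝ)} (hD : CoherentSDG D) {k : X → ℝ}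
    (hk : IsGamble k) :
    ∃ P : (X → ℝ) → ℝ,
      (∀ h h', IsGamble h → IsGamble h' → P (fun x => h x + h' x) = P h + P h') ∧
      (∀ (c : ℝ) h, IsGamble h → P (fun x => c * h x) = c * P h) ∧
      (∀ h, IsGamble h → Lr D h ≤ P h) ∧
      (∀ h, IsGamble h → P h ≤ -Lr D (fun x => -h x)) ∧
      P k = Lr D k ∧ P (fun _ => (1:ℝ)) = 1 := by
  classical
  set μ := Lr D k with hμ
  have hkmem : k ∈ Gsub X := hk
  set kk : Gsub X := ⟨k, hk⟩ with hkk
  have Hsm : ∀ c : ℝ, c • kk = 0 → c • μ = 0 := by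
    intro c hc
    rcases eq_or_ne c 0 with rfl | hc0
    · simp
    · have hk0 : k = 0 := by
        have h1 : (c • kk : Gsub X).val = c • k := rfl
        have h2 : (c • kk : Gsub X).val = 0 := by rw [hc]; rfl
        have h3 : c • k = (0 : X → ℝ) := by rw [← h1, h2]
        funext x
        have := congrFun h3 x
        simp only [Pi.smul_apply, smul_eq_mul, Pi.zero_apply] at this
        have := mul_eq_zero.mp this
        tauto
      have : μ = 0 := by
        rw [hμ, hk0]
        have e : ((0 : X → ℝ)) = fun _ : X => (0:ℝ) := rfl
        rw [e, Lr_const hD]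
      rw [this]; simp
  let f : (Gsub X) →ₗ.[ℝ] ℝ := LinearPMap.mkSpanSingleton' kk μ Hsm
  set N : Gsub X → ℝ := fun h => -Lr D (fun x => -(h.val x)) with hN
  have N_hom : ∀ c : ℝ, 0 < c → ∀ x : Gsub X, N (c • x) = c * N x := by
    intro c hc x
    have e : (fun y => -((c • x : Gsub X).val y)) = fun y => c * (-(x.val y)) := by
      funext y; simp [Pi.smul_apply, smul_eq_mul]; try ring
    simp only [hN]
    rw [e, Lr_smul hD x.2.neg (le_of_lt hc)]
    ring
  have N_add : ∀ x y : Gsub X, N (x + y) ≤ N x + N y := by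
    intro x y
    have h1 := Lr_superadd hD x.2.neg y.2.neg
    have e : (fun z => -(x.val z) + -(y.val z)) = fun z => -((x + y : Gsub X).val z) := by
      funext z; simp [Pi.add_apply]; try ring
    rw [e] at h1
    simp only [hN]
    linarith
  have hdom : ∀ x : f.domain, f x ≤ N x := by
    rintro ⟨x, hx⟩
    have hx' : x ∈ (Submodule.span ℝ {kk}) := by
      have e := LinearPMap.domain_mkSpanSingleton (σ := RingHom.id ℝ) kk μ Hsm
      show x ∈ (Submodule.span ℝ {kk} : Submodule ℝ (Gsub X))
      rw [← e]; exact hx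
    obtain ⟨c, hc⟩ := Submodule.mem_span_singleton.mp hx'
    have happ : f ⟨x, hx⟩ = c • μ := by
      have h2 : f ⟨c • kk, hc.symm ▸ hx⟩ = c • μ :=
        LinearPMap.mkSpanSingleton'_apply kk μ Hsm c _
      have e3 : (⟨x, hx⟩ : f.domain) = ⟨c • kk, hc.symm ▸ hx⟩ := Subtype.ext hc.symm
      rw [e3, h2]
    rw [happ]
    have hval : (x : X → ℝ) = c • k := by
      rw [← hc]; rfl
    rcases le_or_gt 0 c with hc0 | hc0
    · have e : (fun z => -(x.val z)) = fun z => c * (-(k z)) := by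
        funext z
        have := congrFun hval z
        simp only [Pi.smul_apply, smul_eq_mul] at this
        rw [show x.val z = x.val z from rfl]
        simp only [this]; ring
      simp only [hN]
      rw [e, Lr_smul hD hk.neg hc0]
      have := L_le_U hD hk
      have h4 : c • μ = c * μ := rfl
      rw [h4]
      nlinarith
    · have e : (fun z => -(x.val z)) = fun z => (-c) * k z := by
        funext z
        have := congrFun hval z
        simp only [Pi.smul_apply, smul_eq_mul] at this
        simp only [this]; ring
      simp only [hN]
      rw [e, Lr_smul hD hk (by linarith)]
      have h4 : c • μ = c * μ := rfl
      rw [h4, hμ]; ring_nf; exact le_refl _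
  obtain ⟨g, hg1, hg2⟩ := exists_extension_of_le_sublinear f N N_hom N_add hdom
  set P : (X → ℝ) → ℝ := fun h => if hh : IsGamble h then g ⟨h, hh⟩ else 0 with hP
  have Pval : ∀ (h : X → ℝ) (hh : IsGamble h), P h = g ⟨h, hh⟩ := by
    intro h hh; simp only [hP, dif_pos hh]
  have Ple : ∀ h, IsGamble h → P h ≤ -Lr D (fun x => -h x) := by
    intro h hh
    rw [Pval h hh]
    exact hg2 ⟨h, hh⟩
  have Pge : ∀ h, IsGamble h → Lr D h ≤ P h := by
    intro h hh
    have h1 := hg2 (-(⟨h, hh⟩ : Gsub X))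
    rw [map_neg] at h1
    simp only [hN] at h1
    have e : (fun x => -((-(⟨h, hh⟩ : Gsub X)).val x)) = h := by
      funext x; simp
    rw [e] at h1
    rw [Pval h hh]
    linarith
  refine ⟨P, ?_, ?_, Pge, Ple, ?_, ?_⟩
  · intro h h' hh hh'
    rw [Pval _ (hh.add hh'), Pval _ hh, Pval _ hh']
    have e : (⟨fun x => h x + h' x, hh.add hh'⟩ : Gsub X) = ⟨h, hh⟩ + ⟨h', hh'⟩ := rfl
    rw [e, map_add]
  · intro c h hh
    rw [Pval _ (hh.smul c), Pval _ hh]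
    have e : (⟨fun x => c * h x, hh.smul c⟩ : Gsub X) = c • ⟨h, hh⟩ := rfl
    rw [e, map_smul, smul_eq_mul]
  · rw [Pval _ hk]
    have hkdom : kk ∈ f.domain := by
      show kk ∈ (LinearPMap.mkSpanSingleton' kk μ Hsm).domain
      rw [LinearPMap.domain_mkSpanSingleton]
      exact Submodule.mem_span_singleton_self kk
    have := hg1 ⟨kk, hkdom⟩
    rw [this]
    have : f ⟨kk, hkdom⟩ = μ := LinearPMap.mkSpanSingleton'_apply_self kk μ Hsm _
    rw [this]
  · have h1 := Ple (fun _ => (1:ℝ)) (isGamble_const 1)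
    have h2 := Pge (fun _ => (1:ℝ)) (isGamble_const 1)
    rw [Lr_const hD] at h2
    have e : (fun x : X => -(1:ℝ)) = fun _ : X => (-1 : ℝ) := rfl
    rw [e, Lr_const hD] at h1
    linarith

/-! ### Product-space upper bound -/

section ProdAux

variable {X1 X2 : Type*} [Nonempty X1] [Nonempty X2]

lemma slice_isGamble {H : X1 × X2 → ℝ} (hH : IsGamble H) (x1 : X1) :
    IsGamble (fun x2 => H (x1, x2)) := by
  obtain ⟨M, hM⟩ := hH
  exact ⟨M, fun x2 => hM _⟩

lemma key_le {D1 : Set (X1 → ℝ)} {D2 : Set (X2 → ℝ)} (hD1 : CoherentSDG D1)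
    (hD2 : CoherentSDG D2) {F1 : Set (Set X1)} {F2 : Set (Set X2)}
    {f g : X1 → ℝ} {k : X2 → ℝ} (hf : IsGamble f) (hg : IsGamble g) (hk : IsGamble k)
    (hg0 : 0 ≤ g) {m : ℝ}
    (hm : (fun p : X1 × X2 => f p.1 + g p.1 * k p.2 - m) ∈ indNatExt D1 D2 F1 F2) :
    m ≤ Lr D1 (fun x1 => f x1 + g x1 * Lr D2 k) := by
  classical
  obtain ⟨P, Padd, Psmul, Pge, Ple, Pk, Pone⟩ := exists_P hD2 hk
  have Pconst : ∀ c : ℝ, P (fun _ : X2 => c) = c := by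
    intro c
    have e : (fun _ : X2 => c) = fun x => c * (fun _ : X2 => (1:ℝ)) x := by
      funext x; ring
    rw [e, Psmul c _ (isGamble_const 1), Pone, mul_one]
  have Pbound : ∀ h : X2 → ℝ, IsGamble h → ∀ M : ℝ, (∀ x2, |h x2| ≤ M) → |P h| ≤ M := by
    intro h hh M hM
    rw [abs_le]
    constructor
    · have h1 := Pge h hh
      have h2 : -M ≤ Lr D2 h := const_le_Lr hD2 hh (fun x => (abs_le.mp (hM x)).1)
      linarith
    · have h1 := Ple h hh
      have h2 : -M ≤ Lr D2 (fun x => -h x) :=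
        const_le_Lr hD2 hh.neg (fun x => by linarith [(abs_le.mp (hM x)).2])
      linarith
  have inner_isGamble : ∀ H : X1 × X2 → ℝ, IsGamble H →
      IsGamble (fun x1 => P (fun x2 => H (x1, x2))) := by
    intro H hH
    obtain ⟨M, hM0, hM⟩ := hH.bound_nonneg
    exact ⟨M, fun x1 => Pbound _ (slice_isGamble hH x1) M (fun x2 => hM _)⟩
  set Φ : (X1 × X2 → ℝ) → ℝ := fun H => Lr D1 (fun x1 => P (fun x2 => H (x1, x2))) with hΦ
  have Phi_add_ge : ∀ H H' : X1 × X2 → ℝ, IsGamble H → IsGamble H' →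
      Φ H + Φ H' ≤ Φ (H + H') := by
    intro H H' hH hH'
    have e : (fun x1 => P (fun x2 => (H + H') (x1, x2))) =
        fun x1 => P (fun x2 => H (x1, x2)) + P (fun x2 => H' (x1, x2)) :=
      funext fun x1 => Padd _ _ (slice_isGamble hH x1) (slice_isGamble hH' x1)
    show _ ≤ Lr D1 _
    rw [e]
    exact Lr_superadd hD1 (inner_isGamble H hH) (inner_isGamble H' hH')
  have Phi_smul : ∀ c : ℝ, 0 ≤ c → ∀ H : X1 × X2 → ℝ, IsGamble H →
      Φ (fun p => c * H p) = c * Φ H := by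
    intro c hc H hH
    have e : (fun x1 => P (fun x2 => c * H (x1, x2))) =
        fun x1 => c * P (fun x2 => H (x1, x2)) :=
      funext fun x1 => Psmul c _ (slice_isGamble hH x1)
    show Lr D1 _ = _
    rw [e]
    exact Lr_smul hD1 (inner_isGamble H hH) hc
  have P0 : P (fun _ : X2 => (0:ℝ)) = 0 := Pconst 0
  have Phi_gen : ∀ a ∈ (A12 D2 F1 ∪ A21 D1 F2) ∪ Gpos (X1 × X2),
      IsGamble a ∧ 0 ≤ Φ a := by
    rintro a ((⟨f2, hf2, B1, _hB1, rfl⟩ | ⟨f1, hf1, B2, _hB2, rfl⟩) | ha)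
    · have hgf2 := hD2.subset_gambles f2 hf2
      have hG : IsGamble (fun p : X1 × X2 => f2 p.2 * ind B1 p.1) := by
        obtain ⟨M, hM⟩ := hgf2
        have g1 : IsGamble (fun p : X1 × X2 => f2 p.2) := ⟨M, fun p => hM p.2⟩
        have g2 : IsGamble (fun p : X1 × X2 => ind B1 p.1) :=
          ⟨1, fun p => abs_le.mpr ⟨by linarith [ind_nonneg B1 p.1], ind_le_one B1 p.1⟩⟩
        exact g1.mul g2
      refine ⟨hG, ?_⟩
      have hpos : ∀ x1, 0 ≤ P (fun x2 => f2 x2 * ind B1 x1) := by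
        intro x1
        by_cases hx : x1 ∈ B1
        · have e : (fun x2 => f2 x2 * ind B1 x1) = f2 := by
            funext x2; rw [ind, Set.indicator_of_mem hx]; simp
          rw [e]
          exact le_trans (Lr_nonneg_of_mem hD2 hf2) (Pge f2 hgf2)
        · have e : (fun x2 => f2 x2 * ind B1 x1) = fun _ : X2 => (0:ℝ) := by
            funext x2; rw [ind, Set.indicator_of_notMem hx]; simp
          rw [e, P0]
      exact const_le_Lr hD1 (inner_isGamble _ hG) hpos
    · have hgf1 := hD1.subset_gambles f1 hf1
      have hG : IsGamble (fun p : X1 × X2 => f1 p.1 * ind B2 p.2) := by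
        obtain ⟨M, hM⟩ := hgf1
        have g1 : IsGamble (fun p : X1 × X2 => f1 p.1) := ⟨M, fun p => hM p.1⟩
        have g2 : IsGamble (fun p : X1 × X2 => ind B2 p.2) :=
          ⟨1, fun p => abs_le.mpr ⟨by linarith [ind_nonneg B2 p.2], ind_le_one B2 p.2⟩⟩
        exact g1.mul g2
      refine ⟨hG, ?_⟩
      have hγ : 0 ≤ P (ind B2) := by
        refine le_trans ?_ (Pge (ind B2) (isGamble_ind B2))
        exact const_le_Lr hD2 (isGamble_ind B2) (fun x2 => ind_nonneg B2 x2)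
      have e : (fun x1 => P (fun x2 => f1 x1 * ind B2 x2)) =
          fun x1 => P (ind B2) * f1 x1 := by
        funext x1
        rw [Psmul (f1 x1) (ind B2) (isGamble_ind B2)]
        ring
      show 0 ≤ Lr D1 _
      rw [e, Lr_smul hD1 hgf1 hγ]
      exact mul_nonneg hγ (Lr_nonneg_of_mem hD1 hf1)
    · obtain ⟨haG, ha0, _⟩ := ha
      refine ⟨haG, ?_⟩
      have hpos : ∀ x1, 0 ≤ P (fun x2 => a (x1, x2)) := by
        intro x1
        refine le_trans ?_ (Pge _ (slice_isGamble haG x1))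
        refine const_le_Lr hD2 (slice_isGamble haG x1) (fun x2 => ?_)
        have := ha0 (x1, x2)
        simpa using this
      exact const_le_Lr hD1 (inner_isGamble _ haG) hpos
  have Phi_posi : ∀ H ∈ indNatExt D1 D2 F1 F2, IsGamble H ∧ 0 ≤ Φ H := by
    rintro H ⟨n, l, h, hl, hmem, rfl⟩
    induction n with
    | zero =>
      rw [Fin.sum_univ_one]
      obtain ⟨hG, hP⟩ := Phi_gen (h 0) (hmem 0)
      have e : l 0 • h 0 = fun p => l 0 * h 0 p := rfl
      rw [e]
      refine ⟨hG.smul (l 0), ?_⟩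
      rw [Phi_smul (l 0) (le_of_lt (hl 0)) _ hG]
      exact mul_nonneg (le_of_lt (hl 0)) hP
    | succ n ih =>
      rw [Fin.sum_univ_succ]
      obtain ⟨hbG, hbP⟩ := ih (fun i => l i.succ) (fun i => h i.succ)
        (fun i => hl i.succ) (fun i => hmem i.succ)
      obtain ⟨hG0, hP0'⟩ := Phi_gen (h 0) (hmem 0)
      have e : l 0 • h 0 = fun p => l 0 * h 0 p := rfl
      have haG : IsGamble (l 0 • h 0) := by rw [e]; exact hG0.smul (l 0)
      have haP : 0 ≤ Φ (l 0 • h 0) := by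
        rw [e, Phi_smul (l 0) (le_of_lt (hl 0)) _ hG0]
        exact mul_nonneg (le_of_lt (hl 0)) hP0'
      have hsumG : IsGamble (l 0 • h 0 + ∑ i : Fin (n+1), l i.succ • h i.succ) := by
        have := haG.add hbG
        exact this
      refine ⟨hsumG, ?_⟩
      have := Phi_add_ge _ _ haG hbG
      linarith
  have hkey := Phi_posi _ hm
  obtain ⟨_, hge⟩ := hkey
  have e2 : (fun x1 => P (fun x2 => (fun p : X1 × X2 => f p.1 + g p.1 * k p.2 - m) (x1, x2))) =
      fun x1 => f x1 + g x1 * Lr D2 k - m := by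
    funext x1
    have es : (fun x2 => f x1 + g x1 * k x2 - m) =
        fun x2 => (fun _ : X2 => f x1 - m) x2 + (fun x2 => g x1 * k x2) x2 := by
      funext x2; ring
    show P (fun x2 => f x1 + g x1 * k x2 - m) = _
    rw [es, Padd _ _ (isGamble_const _) (hk.smul (g x1)), Pconst, Psmul _ _ hk, Pk]
    ring
  have hge2 : 0 ≤ Lr D1 (fun x1 =>
      P (fun x2 => (fun p : X1 × X2 => f p.1 + g p.1 * k p.2 - m) (x1, x2))) := hge
  rw [e2] at hge2
  have e3 : (fun x1 => f x1 + g x1 * Lr D2 k - m) =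
      fun x1 => (fun y => f y + g y * Lr D2 k) x1 + (-m) := by
    funext x1; ring
  have hGfg : IsGamble (fun x1 => f x1 + g x1 * Lr D2 k) :=
    hf.add (hg.mul (isGamble_const (Lr D2 k)))
  rw [e3, Lr_add_const hD1 hGfg] at hge2
  linarith

end ProdAux

lemma key_mem_simple {X1 X2 : Type*} [Nonempty X1] [Nonempty X2]
    {D1 : Set (X1 → ℝ)} {D2 : Set (X2 → ℝ)} (hD1 : CoherentSDG D1)
    (hD2 : CoherentSDG D2) {F1 : Set (Set X1)} {F2 : Set (Set X2)}
    {f g : X1 → ℝ} {k : X2 → ℝ} (hf : IsGamble f) (hg : IsGamble g) (hk : IsGamble k)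
    (hsimple : SimpleMeas F1 g) {m : ℝ}
    (hm : m < Lr D1 (fun x1 => f x1 + g x1 * Lr D2 k)) :
    (fun p : X1 × X2 => f p.1 + g p.1 * k p.2 - m) ∈ indNatExt D1 D2 F1 F2 := by
  classical
  obtain ⟨c0, n, c, Bs, hc0, hc, hBs, hgeq⟩ := hsimple
  set μ2 := Lr D2 k with hμ2
  set R := Lr D1 (fun x1 => f x1 + g x1 * μ2) with hR
  set m1 := (m + R) / 2 with hm1def
  have hm1a : m < m1 := by rw [hm1def]; linarith
  have hm1b : m1 < R := by rw [hm1def]; linarith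
  have hGfg : IsGamble (fun x1 => f x1 + g x1 * μ2) :=
    hf.add (hg.mul (isGamble_const μ2))
  have hT1mem : (fun x1 => (fun y => f y + g y * μ2) x1 - m1) ∈ D1 :=
    mem_of_lt_Lr hD1 hGfg hm1b
  obtain ⟨Mg, hMg0, hMg⟩ := hg.bound_nonneg
  set δ := (m1 - m) / (2 * (Mg + 1)) with hδdef
  have hδpos : 0 < δ := by
    rw [hδdef]; exact div_pos (by linarith) (by linarith)
  have hkm' : (fun x2 => k x2 - (μ2 - δ)) ∈ D2 :=
    mem_of_lt_Lr hD2 hk (by rw [← hμ2]; linarith)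
  set gens := (A12 D2 F1 ∪ A21 D1 F2) ∪ Gpos (X1 × X2) with hgens
  -- T1 : the D1 part
  have hT1 : (fun p : X1 × X2 => f p.1 + g p.1 * μ2 - m1) ∈ posi gens := by
    refine posi_of_mem (Or.inl (Or.inr ⟨fun y => f y + g y * μ2 - m1, hT1mem, Set.univ,
      Or.inr rfl, ?_⟩))
    funext p; rw [ind_univ, mul_one]
  -- T3 : the positive slack
  have hT3 : (fun p : X1 × X2 => (m1 - m) - g p.1 * δ) ∈ posi gens := by
    have hlb : ∀ p : X1 × X2, (m1 - m) / 2 ≤ (m1 - m) - g p.1 * δ := by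
      intro p
      have h1 : g p.1 ≤ Mg := (abs_le.mp (hMg p.1)).2
      have h2 : g p.1 * δ ≤ Mg * δ := mul_le_mul_of_nonneg_right h1 (le_of_lt hδpos)
      have h3 : Mg * δ ≤ (m1 - m) / 2 := by
        rw [hδdef, show Mg * ((m1 - m) / (2 * (Mg + 1))) = (Mg * (m1 - m)) / (2 * (Mg + 1)) from
          by ring, div_le_div_iff₀ (by linarith) (by norm_num)]
        nlinarith
      linarith
    refine posi_of_mem (Or.inr ⟨?_, ?_, ?_⟩)
    · have g1 : IsGamble (fun p : X1 × X2 => g p.1) := ⟨Mg, fun p => hMg p.1⟩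
      have := (isGamble_const (X := X1 × X2) (m1 - m)).sub (g1.mul (isGamble_const δ))
      exact this
    · intro p
      have := hlb p
      simp only [Pi.zero_apply]
      linarith
    · intro h0
      obtain ⟨p0⟩ := (inferInstance : Nonempty (X1 × X2))
      have := congrFun h0 p0
      simp only [Pi.zero_apply] at this
      have := hlb p0
      linarith
  -- generators for the k-part
  have hbase : ∀ B1 : Set X1, B1 ∈ F1 ∪ {Set.univ} →
      (fun p : X1 × X2 => (k p.2 - (μ2 - δ)) * ind B1 p.1) ∈ posi gens := by
    intro B1 hB1
    exact posi_of_mem (Or.inl (Or.inl ⟨fun x2 => k x2 - (μ2 - δ), hkm', B1, hB1, rfl⟩))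
  -- step/fold machinery
  have step : ∀ a ∈ posi gens, ∀ cc : ℝ, 0 ≤ cc → ∀ v ∈ posi gens,
      (fun p : X1 × X2 => a p + cc * v p) ∈ posi gens := by
    intro a ha cc hcc v hv
    rcases eq_or_lt_of_le hcc with rfl | hpos
    · have e : (fun p : X1 × X2 => a p + 0 * v p) = a := by funext p; ring
      rw [e]; exact ha
    · have := posi_add_s14 ha (posi_smul_s14 hpos hv)
      exact this
  have fold : ∀ (nn : ℕ) (cs : Fin nn → ℝ) (vs : Fin nn → X1 × X2 → ℝ),
      (∀ i, 0 ≤ cs i) → (∀ i, vs i ∈ posi gens) → ∀ a ∈ posi gens,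
      (fun p => a p + ∑ i, cs i * vs i p) ∈ posi gens := by
    intro nn
    induction nn with
    | zero =>
      intro cs vs _ _ a ha
      have e : (fun p : X1 × X2 => a p + ∑ i : Fin 0, cs i * vs i p) = a := by
        funext p; simp
      rw [e]; exact ha
    | succ nn ih =>
      intro cs vs hcs hvs a ha
      have e : (fun p : X1 × X2 => a p + ∑ i : Fin (nn+1), cs i * vs i p) =
          fun p => (fun q => a q + cs 0 * vs 0 q) p + ∑ i : Fin nn, cs i.succ * vs i.succ p := by
        funext p; rw [Fin.sum_univ_succ]; ring
      rw [e]
      exact ih (fun i => cs i.succ) (fun i => vs i.succ) (fun i => hcs i.succ)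
        (fun i => hvs i.succ) _ (step a ha (cs 0) (hcs 0) _ (hvs 0))
  -- assemble
  have base0 := hbase Set.univ (Or.inr rfl)
  have hT13 : (fun p : X1 × X2 => (fun q : X1 × X2 => f q.1 + g q.1 * μ2 - m1) p +
      (fun q : X1 × X2 => (m1 - m) - g q.1 * δ) p) ∈ posi gens := posi_add_s14 hT1 hT3
  have hT134 := step _ hT13 c0 hc0 _ base0
  have hfinal := fold n c (fun i => fun p : X1 × X2 => (k p.2 - (μ2 - δ)) * ind (Bs i) p.1)
    hc (fun i => hbase (Bs i) (Or.inl (hBs i))) _ hT134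
  refine Set.mem_of_eq_of_mem ?_ hfinal
  funext p
  have hgp : g p.1 = c0 + ∑ i, c i * ind (Bs i) p.1 := by rw [hgeq]
  have esum : (∑ i, c i * ((k p.2 - (μ2 - δ)) * ind (Bs i) p.1)) =
      (k p.2 - (μ2 - δ)) * ∑ i, c i * ind (Bs i) p.1 := by
    rw [Finset.mul_sum]
    exact Finset.sum_congr rfl (fun i _ => by ring)
  simp only [ind_univ, mul_one]
  rw [hgp, esum]
  ring

/-! ### Coherence of the natural extension set -/

lemma ind_nonzero_of_nonempty {B : Set X} (hB : B.Nonempty) :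
    (fun x => ind B x) ≠ (0 : X → ℝ) := by
  intro h0
  obtain ⟨x, hx⟩ := hB
  have := congrFun h0 x
  simp only [Pi.zero_apply] at this
  rw [ind, Set.indicator_of_mem hx] at this
  simp at this

lemma Alp_subset {C : Set ((X → ℝ) × Set X)} (hC : C ⊆ domC X)
    {lp : (X → ℝ) → Set X → EReal} {D' : Set (X → ℝ)} (hD' : CoherentSDG D')
    (heq : ∀ p ∈ C, lp p.1 p.2 = lpOf D' p.1 p.2) : Alp C lp ⊆ D' := by
  rintro g ⟨p, hp, m, hlt, rfl⟩
  rw [heq p hp] at hlt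
  obtain ⟨e, he, hme⟩ := lt_sSup_iff.mp hlt
  obtain ⟨μ, hμmem, rfl⟩ := he
  have hmμ : m < μ := EReal.coe_lt_coe_iff.mp hme
  have edec : (fun x => (p.1 x - m) * ind p.2 x) =
      (fun x => (p.1 x - μ) * ind p.2 x) + (fun x => (μ - m) * ind p.2 x) := by
    funext x; simp only [Pi.add_apply]; ring
  rw [edec]
  refine hD'.d3 _ hμmem _ (hD'.d1 _ ((isGamble_const (μ - m)).mul (isGamble_ind p.2)) ?_ ?_)
  · intro x
    simp only [Pi.zero_apply]
    exact mul_nonneg (by linarith) (ind_nonneg p.2 x)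
  · intro h0
    obtain ⟨x, hx⟩ := (hC hp).2
    have := congrFun h0 x
    simp only [Pi.zero_apply] at this
    rw [ind, Set.indicator_of_mem hx] at this
    simp only [Pi.one_apply, mul_one] at this
    linarith

lemma coherent_ElpSet {C : Set ((X → ℝ) × Set X)} (hC : C ⊆ domC X)
    {lp : (X → ℝ) → Set X → EReal} (hlp : Coherent C lp) : CoherentSDG (ElpSet C lp) := by
  obtain ⟨D', hD', heq⟩ := hlp
  have hsub : ElpSet C lp ⊆ D' := natExtSet_subset hD' (Alp_subset hC hD' heq)
  have hAg : ∀ a ∈ Alp C lp ∪ Gpos X, IsGamble a := by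
    rintro a (⟨p, hp, m, _, rfl⟩ | ha)
    · exact ((hC hp).1.sub_const m).mul (isGamble_ind p.2)
    · exact ha.1
  refine ⟨fun f hf => posi_isGamble hAg hf, ?_, ?_, ?_, ?_⟩
  · intro f hf h0 hne
    exact posi_of_mem (Or.inr ⟨hf, h0, hne⟩)
  · intro f hf l hl
    have := posi_smul_s14 hl hf
    have e : l • f = fun x => l * f x := rfl
    rw [e]; exact this
  · intro f hf g hg
    exact posi_add_s14 hf hg
  · intro f hle hmem
    exact hD'.d4 f hle (hsub hmem)

lemma SimpleMeas.isGamble {Bfam : Set (Set X)} {g : X → ℝ} (hs : SimpleMeas Bfam g) :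
    IsGamble g := by
  obtain ⟨c0, n, c, Bs, _, _, _, rfl⟩ := hs
  have h1 : ∀ i : Fin n, IsGamble (fun x => c i * ind (Bs i) x) :=
    fun i => (isGamble_const (c i)).mul (isGamble_ind (Bs i))
  have h2 := IsGamble.sum h1
  exact (isGamble_const c0).add h2

/-! ### The master lemma -/

lemma master {X1 X2 : Type*} [Nonempty X1] [Nonempty X2]
    {D1 : Set (X1 → ℝ)} {D2 : Set (X2 → ℝ)} (hD1 : CoherentSDG D1)
    (hD2 : CoherentSDG D2) {F1 : Set (Set X1)} {F2 : Set (Set X2)}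
    {f g : X1 → ℝ} {k : X2 → ℝ} (hf : IsGamble f) (hg : IsGamble g) (hk : IsGamble k)
    (hg0 : 0 ≤ g) (hmeas : BMeas F1 g) :
    lpOf (indNatExt D1 D2 F1 F2) (fun p => f p.1 + g p.1 * k p.2) Set.univ =
      ((Lr D1 (fun x1 => f x1 + g x1 * Lr D2 k) : ℝ) : EReal) := by
  classical
  set μ2 := Lr D2 k with hμ2
  set R := Lr D1 (fun x1 => f x1 + g x1 * μ2) with hR
  set S := {m : ℝ | (fun p : X1 × X2 => f p.1 + g p.1 * k p.2 - m) ∈ indNatExt D1 D2 F1 F2}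
    with hS
  have hub : ∀ m ∈ S, m ≤ R := fun m hm => key_le hD1 hD2 hf hg hk hg0 hm
  have hlb : ∀ m : ℝ, m < R → m ∈ S := by
    intro m hm
    obtain ⟨gs, hgs, hconv⟩ := hmeas
    obtain ⟨Mk, hMk0, hMk⟩ := hk.bound_nonneg
    set ε := (R - m) / 2 with hε
    have hεpos : 0 < ε := by rw [hε]; linarith
    set δ0 := ε / (Mk + |μ2| + 1) with hδ0
    have hd : (0:ℝ) < Mk + |μ2| + 1 := by positivity
    have hδ0pos : 0 < δ0 := by rw [hδ0]; positivity
    rw [Metric.tendstoUniformly_iff] at hconv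
    obtain ⟨N, hN⟩ := (hconv δ0 hδ0pos).exists
    have hdist : ∀ x, |g x - gs N x| < δ0 := by
      intro x
      have := hN x
      rwa [Real.dist_eq] at this
    obtain ⟨hgn0, hgnsimple⟩ := hgs N
    have hgnG : IsGamble (gs N) := hgnsimple.isGamble
    have habs : |μ2| * δ0 < ε := by
      calc |μ2| * δ0 = |μ2| * ε / (Mk + |μ2| + 1) := by rw [hδ0]; ring
      _ < ε := by
        rw [div_lt_iff₀ hd]
        nlinarith [abs_nonneg μ2]
    have hMkδ : Mk * δ0 < ε := by
      calc Mk * δ0 = Mk * ε / (Mk + |μ2| + 1) := by rw [hδ0]; ring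
      _ < ε := by
        rw [div_lt_iff₀ hd]
        nlinarith [abs_nonneg μ2]
    -- compare R with Rn
    have hptw : ∀ x, f x + g x * μ2 ≤ (fun y => f y + gs N y * μ2) x + |μ2| * δ0 := by
      intro x
      have h1 : (g x - gs N x) * μ2 ≤ |g x - gs N x| * |μ2| := by
        calc (g x - gs N x) * μ2 ≤ |(g x - gs N x) * μ2| := le_abs_self _
        _ = |g x - gs N x| * |μ2| := abs_mul _ _
      have h2 : |g x - gs N x| * |μ2| ≤ δ0 * |μ2| :=
        mul_le_mul_of_nonneg_right (le_of_lt (hdist x)) (abs_nonneg _)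
      simp only []
      nlinarith
    have hG1 : IsGamble (fun y => f y + gs N y * μ2) := hf.add (hgnG.mul (isGamble_const μ2))
    have hRn : R ≤ Lr D1 (fun y => f y + gs N y * μ2) + |μ2| * δ0 := by
      have h1 := Lr_mono hD1 (hf.add (hg.mul (isGamble_const μ2)))
        (hG1.add (isGamble_const (|μ2| * δ0))) hptw
      have h2 : Lr D1 (fun x => (fun y => f y + gs N y * μ2) x + |μ2| * δ0) =
          Lr D1 (fun y => f y + gs N y * μ2) + |μ2| * δ0 := Lr_add_const hD1 hG1
      rw [h2] at h1
      exact le_trans h1 (le_refl _)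
    have hm' : m + ε < Lr D1 (fun y => f y + gs N y * μ2) := by
      have : m + 2 * ε = R := by rw [hε]; ring
      linarith
    have hTn := key_mem_simple (F2 := F2) hD1 hD2 hf hgnG hk hgnsimple hm'
    -- the positive remainder
    have hrem : (fun p : X1 × X2 => (g p.1 - gs N p.1) * k p.2 + ε) ∈
        Gpos (X1 × X2) := by
      have hlow : ∀ p : X1 × X2, ε - Mk * δ0 ≤ (g p.1 - gs N p.1) * k p.2 + ε := by
        intro p
        have h1 : |(g p.1 - gs N p.1) * k p.2| ≤ δ0 * Mk := by
          rw [abs_mul]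
          exact mul_le_mul (le_of_lt (hdist p.1)) (hMk p.2) (abs_nonneg _) (le_of_lt hδ0pos)
        have h2 := (abs_le.mp h1).1
        nlinarith
      refine ⟨?_, ?_, ?_⟩
      · obtain ⟨M1, hM1⟩ := hg
        obtain ⟨M2, hM2⟩ := hgnG
        refine ⟨(M1 + M2) * Mk + ε, fun p => ?_⟩
        have h1 : |(g p.1 - gs N p.1) * k p.2| ≤ (M1 + M2) * Mk := by
          rw [abs_mul]
          have h0a := abs_nonneg (g p.1)
          have h0b := hM1 p.1
          have h0c := abs_nonneg (gs N p.1)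
          have h0d := hM2 p.1
          refine mul_le_mul ?_ (hMk p.2) (abs_nonneg _) (by linarith)
          exact le_trans (abs_sub _ _) (add_le_add (hM1 p.1) (hM2 p.1))
        calc |(g p.1 - gs N p.1) * k p.2 + ε| ≤ |(g p.1 - gs N p.1) * k p.2| + |ε| :=
          abs_add_le _ _
        _ ≤ (M1 + M2) * Mk + ε := by
          refine add_le_add h1 ?_
          rw [abs_of_pos hεpos]
      · intro p
        simp only [Pi.zero_apply]
        have := hlow p
        linarith [hMkδ]
      · intro h0
        obtain ⟨p0⟩ := (inferInstance : Nonempty (X1 × X2))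
        have := congrFun h0 p0
        simp only [Pi.zero_apply] at this
        have := hlow p0
        linarith [hMkδ]
    have hsum := posi_add_s14 hTn (posi_of_mem (A := (A12 D2 F1 ∪ A21 D1 F2) ∪ Gpos (X1 × X2))
      (Or.inr hrem))
    show (fun p : X1 × X2 => f p.1 + g p.1 * k p.2 - m) ∈
      posi ((A12 D2 F1 ∪ A21 D1 F2) ∪ Gpos (X1 × X2))
    refine Set.mem_of_eq_of_mem ?_ hsum
    funext p
    simp only [Pi.add_apply]
    ring
  -- wrap up: compute the sSup
  have eset : {mm : ℝ | (fun p : X1 × X2 =>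
      ((fun q : X1 × X2 => f q.1 + g q.1 * k q.2) p - mm) * ind Set.univ p) ∈
      indNatExt D1 D2 F1 F2} = S := by
    ext mm
    have e : (fun p : X1 × X2 =>
        ((fun q : X1 × X2 => f q.1 + g q.1 * k q.2) p - mm) * ind Set.univ p) =
        fun p : X1 × X2 => f p.1 + g p.1 * k p.2 - mm := by
      funext p; rw [ind_univ, mul_one]
    rw [Set.mem_setOf_eq, Set.mem_setOf_eq, e]
  show sSup _ = _
  rw [eset]
  apply le_antisymm
  · refine sSup_le ?_
    rintro e ⟨mm, hmm, rfl⟩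
    exact EReal.coe_le_coe_iff.mpr (hub mm hmm)
  · refine le_of_forall_lt (fun cc hcc => ?_)
    induction cc using EReal.rec with
    | bot =>
      refine lt_of_lt_of_le (EReal.bot_lt_coe (R - 1)) (le_sSup ⟨R - 1, hlb _ (by linarith), rfl⟩)
    | coe r =>
      have hr : r < R := EReal.coe_lt_coe_iff.mp hcc
      refine lt_of_lt_of_le (EReal.coe_lt_coe_iff.mpr (show r < (r + R)/2 by linarith))
        (le_sSup ⟨(r + R)/2, hlb _ (by linarith), rfl⟩)
    | top => exact absurd hcc (not_lt.mpr le_top)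

/-! ### Swap transport -/

lemma mem_indNatExt_swap {X1 X2 : Type*} {D1 : Set (X1 → ℝ)} {D2 : Set (X2 → ℝ)}
    {F1 : Set (Set X1)} {F2 : Set (Set X2)} {G : X2 × X1 → ℝ}
    (hG : G ∈ indNatExt D2 D1 F2 F1) :
    (G ∘ Prod.swap) ∈ indNatExt D1 D2 F1 F2 := by
  obtain ⟨n, l, h, hl, hmem, rfl⟩ := hG
  refine ⟨n, l, fun i => h i ∘ Prod.swap, hl, ?_, ?_⟩
  · intro i
    rcases hmem i with (⟨f2, hf2, B1, hB1, heq⟩ | ⟨f1, hf1, B2, hB2, heq⟩) | ha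
    · refine Or.inl (Or.inr ⟨f2, hf2, B1, hB1, ?_⟩)
      funext p
      show h i (p.2, p.1) = _
      rw [heq]
    · refine Or.inl (Or.inl ⟨f1, hf1, B2, hB2, ?_⟩)
      funext p
      show h i (p.2, p.1) = _
      rw [heq]
    · refine Or.inr ⟨?_, ?_, ?_⟩
      · obtain ⟨M, hM⟩ := ha.1
        exact ⟨M, fun p => hM _⟩
      · intro p
        exact ha.2.1 (Prod.swap p)
      · intro h0
        refine ha.2.2 ?_
        funext q
        have := congrFun h0 (Prod.swap q)
        simpa using this
  · funext p
    simp only [Function.comp_apply, Finset.sum_apply, Pi.smul_apply, smul_eq_mul]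

lemma lpOf_indNatExt_swap {X1 X2 : Type*} {D1 : Set (X1 → ℝ)} {D2 : Set (X2 → ℝ)}
    {F1 : Set (Set X1)} {F2 : Set (Set X2)} (H : X2 × X1 → ℝ) :
    lpOf (indNatExt D2 D1 F2 F1) H Set.univ =
      lpOf (indNatExt D1 D2 F1 F2) (H ∘ Prod.swap) Set.univ := by
  unfold lpOf
  have hsets : {m : ℝ | (fun x => (H x - m) * ind Set.univ x) ∈ indNatExt D2 D1 F2 F1} =
      {m : ℝ | (fun x => ((H ∘ Prod.swap) x - m) * ind Set.univ x) ∈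
        indNatExt D1 D2 F1 F2} := by
    ext m
    constructor
    · intro hmem
      have := mem_indNatExt_swap (D1 := D1) (D2 := D2) (F1 := F1) (F2 := F2)
        (G := fun q => (H q - m) * ind Set.univ q) hmem
      show (fun x => ((H ∘ Prod.swap) x - m) * ind Set.univ x) ∈ indNatExt D1 D2 F1 F2
      refine Set.mem_of_eq_of_mem ?_ this
      funext p
      simp only [Function.comp_apply, ind_univ, mul_one]
    · intro hmem
      have := mem_indNatExt_swap (D1 := D2) (D2 := D1) (F1 := F2) (F2 := F1)
        (G := fun p => ((H ∘ Prod.swap) p - m) * ind Set.univ p) hmem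
      show (fun x => (H x - m) * ind Set.univ x) ∈ indNatExt D2 D1 F2 F1
      refine Set.mem_of_eq_of_mem ?_ this
      funext q
      simp only [Function.comp_apply, ind_univ, mul_one, Prod.swap_swap]
  rw [hsets]

end Aux


/-- Theorem 3: combined factorisation/additivity property of the
independent natural extension, for measurable nonnegative `g`. -/
theorem stmt14 {X1 X2 : Type*} [Nonempty X1] [Nonempty X2]
    (C1 : Set ((X1 → ℝ) × Set X1)) (hC1 : C1 ⊆ domC X1)
    (lp1 : (X1 → ℝ) → Set X1 → EReal) (hlp1 : Coherent C1 lp1)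
    (C2 : Set ((X2 → ℝ) × Set X2)) (hC2 : C2 ⊆ domC X2)
    (lp2 : (X2 → ℝ) → Set X2 → EReal) (hlp2 : Coherent C2 lp2)
    (F1 : Set (Set X1)) (F2 : Set (Set X2))
    (hF1 : ∀ A ∈ F1, A.Nonempty) (hF2 : ∀ A ∈ F2, A.Nonempty) :
    (∀ (f g : X1 → ℝ) (k : X2 → ℝ), IsGamble f → IsGamble k → IsGamble g → 0 ≤ g →
      BMeas F1 g →
      lpProd C1 lp1 C2 lp2 F1 F2 (fun p => f p.1 + g p.1 * k p.2) Set.univ =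
        natExtLP C1 lp1
          (fun x1 => f x1 + g x1 * (natExtLP C2 lp2 k Set.univ).toReal) Set.univ) ∧
    (∀ (f g : X2 → ℝ) (k : X1 → ℝ), IsGamble f → IsGamble k → IsGamble g → 0 ≤ g →
      BMeas F2 g →
      lpProd C1 lp1 C2 lp2 F1 F2 (fun p => f p.2 + g p.2 * k p.1) Set.univ =
        natExtLP C2 lp2
          (fun x2 => f x2 + g x2 * (natExtLP C1 lp1 k Set.univ).toReal) Set.univ) := by
  have hE1 : CoherentSDG (ElpSet C1 lp1) := coherent_ElpSet hC1 hlp1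
  have hE2 : CoherentSDG (ElpSet C2 lp2) := coherent_ElpSet hC2 hlp2
  constructor
  · intro f g k hf hk hg hg0 hmeas
    have hμ : (natExtLP C2 lp2 k Set.univ).toReal = Lr (ElpSet C2 lp2) k := by
      show (lpOf (ElpSet C2 lp2) k Set.univ).toReal = _
      rw [lpOf_univ_eq hE2 hk]
      exact EReal.toReal_coe _
    show lpOf (indNatExt (ElpSet C1 lp1) (ElpSet C2 lp2) F1 F2)
      (fun p => f p.1 + g p.1 * k p.2) Set.univ = _
    rw [master hE1 hE2 hf hg hk hg0 hmeas, hμ]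
    have hGfg : IsGamble (fun x1 => f x1 + g x1 * Lr (ElpSet C2 lp2) k) :=
      hf.add (hg.mul (isGamble_const _))
    exact (lpOf_univ_eq hE1 hGfg).symm
  · intro f g k hf hk hg hg0 hmeas
    have hμ : (natExtLP C1 lp1 k Set.univ).toReal = Lr (ElpSet C1 lp1) k := by
      show (lpOf (ElpSet C1 lp1) k Set.univ).toReal = _
      rw [lpOf_univ_eq hE1 hk]
      exact EReal.toReal_coe _
    show lpOf (indNatExt (ElpSet C1 lp1) (ElpSet C2 lp2) F1 F2)
      (fun p => f p.2 + g p.2 * k p.1) Set.univ = _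
    have hswap := lpOf_indNatExt_swap (D1 := ElpSet C1 lp1) (D2 := ElpSet C2 lp2)
      (F1 := F1) (F2 := F2) (fun q : X2 × X1 => f q.1 + g q.1 * k q.2)
    have he : (fun q : X2 × X1 => f q.1 + g q.1 * k q.2) ∘
        (Prod.swap : X1 × X2 → X2 × X1) = fun p : X1 × X2 => f p.2 + g p.2 * k p.1 := rfl
    rw [he] at hswap
    rw [← hswap, master hE2 hE1 hf hg hk hg0 hmeas, hμ]
    have hGfg : IsGamble (fun x2 => f x2 + g x2 * Lr (ElpSet C1 lp1) k) :=
      hf.add (hg.mul (isGamble_const _))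
    exact (lpOf_univ_eq hE2 hGfg).symm


end IPaper
end
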